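/- Assume η ≠ 1/2, and let A be generated as a nonunital F-subalgebra by a set X of primitive axes of Jordan type η that is closed under the Miyamoto maps (τ(x)(y) ∈ X for all x, y ∈ X). If a, b ∈ X satisfy τ(a) = τ(b) and τ(a) ≠ id, then a = b. -/

import Mathlib

/-- The `lam`-eigenspace of the left-multiplication operator by `x`. -/
def eigSp (F : Type*) {A : Type*} [Field F] [NonUnitalNonAssocCommRing A] [Module F A]
    [SMulCommClass F A A] (x : A) (lam : F) : Submodule F A where
  carrier := {y | x * y = lam • y}
  add_mem' := by
    intro y z hy hz
    simp only [Set.mem_setOf_eq] at *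
    rw [mul_add, hy, hz, smul_add]
  zero_mem' := by simp
  smul_mem' := by
    intro c y hy
    simp only [Set.mem_setOf_eq] at *
    rw [mul_smul_comm, hy, smul_smul, smul_smul, mul_comm]

variable {F A : Type*} [Field F] [NonUnitalNonAssocCommRing A] [Module F A]
  [SMulCommClass F A A] [IsScalarTower F A A]

/-- `a` is a primitive axis of Jordan type `η`:  it is an idempotent, `A` is the internal
direct sum of the `1`-, `0`- and `η`-eigenspaces of `ad_a` with `A_1(a) = F • a` (expressed
as unique decomposition `x = φ • a + α + γ`), `A_0(a)` is a subalgebra, and the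
`ℤ/2`-grading fusion rules hold for `A₊(a) = A_1(a) + A_0(a)`, `A₋(a) = A_η(a)`. -/
structure IsPrimitiveAxis (η : F) (a : A) : Prop where
  idem : a * a = a
  prim : eigSp F a (1 : F) = Submodule.span F {a}
  decomp : ∀ x : A, ∃! t : F × A × A,
    t.2.1 ∈ eigSp F a (0 : F) ∧ t.2.2 ∈ eigSp F a η ∧ x = t.1 • a + t.2.1 + t.2.2
  zz : ∀ y ∈ eigSp F a (0 : F), ∀ z ∈ eigSp F a (0 : F), y * z ∈ eigSp F a (0 : F)
  pp : ∀ y ∈ eigSp F a (1 : F) ⊔ eigSp F a (0 : F),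
       ∀ z ∈ eigSp F a (1 : F) ⊔ eigSp F a (0 : F),
         y * z ∈ eigSp F a (1 : F) ⊔ eigSp F a (0 : F)
  pm : ∀ y ∈ eigSp F a (1 : F) ⊔ eigSp F a (0 : F), ∀ z ∈ eigSp F a η, y * z ∈ eigSp F a η
  mm : ∀ y ∈ eigSp F a η, ∀ z ∈ eigSp F a η,
         y * z ∈ eigSp F a (1 : F) ⊔ eigSp F a (0 : F)

/-- `τ` is the Miyamoto map of the axis `a`:  the `F`-linear map which is the identity on
`A_1(a) ⊔ A_0(a)` and `-1` on `A_η(a)`. -/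
def IsMiyamotoMap (η : F) (a : A) (τ : A →ₗ[F] A) : Prop :=
  (∀ y ∈ eigSp F a (1 : F) ⊔ eigSp F a (0 : F), τ y = y) ∧
  (∀ y ∈ eigSp F a η, τ y = -y)

set_option linter.unusedSectionVars false
set_option maxHeartbeats 1000000

lemma mem_eigSp_iff {x y : A} {l : F} : y ∈ eigSp F x l ↔ x * y = l • y := Iff.rfl

lemma eig_mul {x y : A} {l : F} (h : y ∈ eigSp F x l) : x * y = l • y := mem_eigSp_iff.mp h

lemma a_mem_one {a : A} (haa : a * a = a) : a ∈ eigSp F a 1 := by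
  rw [mem_eigSp_iff, haa, one_smul]

lemma decomp_unique {η : F} {a : A} (ha : IsPrimitiveAxis η a)
    {s₁ s₂ : F} {α₁ α₂ γ₁ γ₂ : A}
    (hα₁ : α₁ ∈ eigSp F a 0) (hγ₁ : γ₁ ∈ eigSp F a η)
    (hα₂ : α₂ ∈ eigSp F a 0) (hγ₂ : γ₂ ∈ eigSp F a η)
    (h : s₁ • a + α₁ + γ₁ = s₂ • a + α₂ + γ₂) :
    s₁ = s₂ ∧ α₁ = α₂ ∧ γ₁ = γ₂ := by
  obtain ⟨t, -, hu⟩ := ha.decomp (s₁ • a + α₁ + γ₁)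
  have h1 := hu (s₁, α₁, γ₁) ⟨hα₁, hγ₁, rfl⟩
  have h2 := hu (s₂, α₂, γ₂) ⟨hα₂, hγ₂, h⟩
  have h3 := h1.trans h2.symm
  simp only [Prod.ext_iff] at h3
  exact ⟨h3.1, h3.2.1, h3.2.2⟩

lemma miy_apply {η : F} {a α γ : A} {τ : A →ₗ[F] A} (hτ : IsMiyamotoMap η a τ)
    (haa : a * a = a) (s : F) (hα : α ∈ eigSp F a 0) (hγ : γ ∈ eigSp F a η) :
    τ (s • a + α + γ) = s • a + α - γ := by
  have h1 : τ (s • a) = s • a :=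
    hτ.1 _ (Submodule.mem_sup_left (Submodule.smul_mem _ _ (a_mem_one haa)))
  have hh2 : τ α = α := hτ.1 _ (Submodule.mem_sup_right hα)
  have h3 : τ γ = -γ := hτ.2 _ hγ
  rw [map_add, map_add, h1, hh2, h3, sub_eq_add_neg]

lemma axis_ne_zero {η : F} {a : A} (hη0 : η ≠ 0) (ha : IsPrimitiveAxis η a)
    {τ : A →ₗ[F] A} (hτ : IsMiyamotoMap η a τ) (hnid : τ ≠ LinearMap.id) : a ≠ 0 := by
  intro h0
  apply hnid
  ext z
  obtain ⟨⟨s, α, γ⟩, ⟨hα, hγ, hze⟩, -⟩ := ha.decomp z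
  have h := eig_mul hγ
  rw [h0, zero_mul] at h
  have hγ0 : γ = 0 := (smul_eq_zero.mp h.symm).resolve_left hη0
  have hz' : z ∈ eigSp F a 1 ⊔ eigSp F a 0 := by
    rw [hze, hγ0, add_zero]
    exact add_mem
      (Submodule.mem_sup_left (Submodule.smul_mem _ _ (a_mem_one ha.idem)))
      (Submodule.mem_sup_right hα)
  simpa using hτ.1 z hz'

lemma key_eqs {η : F} {a b x α m : A} {s t : F}
    (ha : IsPrimitiveAxis η a) (hx : IsPrimitiveAxis η x)
    (hb0 : b ∈ eigSp F a 0) (hma : m ∈ eigSp F a η) (hm : m ≠ 0)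
    (hα : α ∈ eigSp F a 0) (hxe : x = s • a + α + m)
    (hxa : x * a = s • a + η • m) (hxb : x * b = t • b + η • m) :
    s ^ 2 - η * s = (η * (s - t)) * s ∧
      (-(t ^ 2 - η * t)) • b = (η * (s - t)) • α := by
  obtain ⟨⟨lam, α₀, γ₀⟩, ⟨hα₀, hγ₀, hdec⟩, -⟩ := hx.decomp (a - b)
  have hxα₀ : x * α₀ = 0 := by rw [eig_mul hα₀, zero_smul]
  have hxγ₀ : x * γ₀ = η • γ₀ := eig_mul hγ₀
  have e1 : x * (a - b) = lam • x + η • γ₀ := by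
    rw [hdec, mul_add, mul_add, mul_smul_comm, hx.idem, hxα₀, hxγ₀, add_zero]
  have e1' : x * (a - b) = s • a - t • b := by
    rw [mul_sub, hxa, hxb]; module
  have e2 : x * (x * (a - b)) = lam • x + (η * η) • γ₀ := by
    rw [e1, mul_add, mul_smul_comm, hx.idem, mul_smul_comm, hxγ₀]; module
  have e2' : x * (x * (a - b)) = (s * s) • a - (t * t) • b + (η * (s - t)) • m := by
    rw [e1', mul_sub, mul_smul_comm, mul_smul_comm, hxa, hxb]; module
  have e3 : ((1 - η) * lam) • x
      = (s ^ 2 - η * s) • a + (-(t ^ 2 - η * t)) • b + (η * (s - t)) • m := by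
    have h := congrArg₂ (fun u v : A => u - η • v) e2 e1
    rw [e2', e1'] at h
    linear_combination (norm := module) -h
  have e4 : (((1 - η) * lam) * s) • a + (((1 - η) * lam) • α) + (((1 - η) * lam) • m)
      = (s ^ 2 - η * s) • a + (-(t ^ 2 - η * t)) • b + (η * (s - t)) • m := by
    rw [← e3, hxe]; module
  obtain ⟨hc1, hc2, hc3⟩ := decomp_unique ha
    (Submodule.smul_mem _ _ hα) (Submodule.smul_mem _ _ hma)
    (Submodule.smul_mem _ _ hb0) (Submodule.smul_mem _ _ hma) e4
  have hL : (1 - η) * lam = η * (s - t) := by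
    have h5 := sub_eq_zero.mpr hc3
    rw [← sub_smul] at h5
    rcases smul_eq_zero.mp h5 with h | h
    · exact sub_eq_zero.mp h
    · exact absurd h hm
  refine ⟨?_, ?_⟩
  · rw [← hL]; linear_combination -hc1
  · rw [← hL]; exact hc2.symm

/-- The final contradiction in the configuration `x = t • b + m`. -/
lemma case_s0 {η : F} (h2 : (2 : F) ≠ 0) (hη2 : η ≠ 1 / 2)
    {a b x m : A} {t : F}
    (hb : IsPrimitiveAxis η b) (hx : IsPrimitiveAxis η x)
    (haa : a * a = a) (hab : a * b = 0)
    (ham : a * m = η • m) (hmb : m ∈ eigSp F b η) (hm : m ≠ 0)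
    (hxe : x = t • b + m) (htη : t * (1 - η) = η) : False := by
  have hbb := hb.idem
  have hbm : b * m = η • m := eig_mul hmb
  have hmb2 : m * b = η • m := by rw [mul_comm]; exact hbm
  have hba : b * a = 0 := by rw [mul_comm]; exact hab
  have hma2 : m * a = η • m := by rw [mul_comm]; exact ham
  -- the square of m
  have hmm : m * m = (t - t * t) • b + (1 - 2 * (t * η)) • m := by
    have h0 := hx.idem
    rw [hxe] at h0
    have hexp : (t • b + m) * (t • b + m) = (t * t) • b + (2 * (t * η)) • m + m * m := by
      simp only [mul_add, add_mul, smul_mul_assoc, mul_smul_comm, smul_smul, hbb, hbm, hmb2]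
      module
    rw [hexp] at h0
    linear_combination (norm := module) h0
  have hmmsup := hb.mm m hmb m hmb
  obtain ⟨y₁, hy₁, y₀, hy₀, hsum⟩ := Submodule.mem_sup.mp hmmsup
  rw [hb.prim] at hy₁
  obtain ⟨ν, hν⟩ := Submodule.mem_span_singleton.mp hy₁
  have heq2 : ν • b + y₀ + (0 : A) = (t - t * t) • b + (0 : A) + (1 - 2 * (t * η)) • m := by
    rw [add_zero, hν, hsum, hmm]; module
  obtain ⟨-, -, hγeq⟩ := decomp_unique hb hy₀ (zero_mem _) (zero_mem _)
    (Submodule.smul_mem _ _ hmb) heq2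
  have h2t : 2 * (t * η) = 1 := by
    rcases smul_eq_zero.mp hγeq.symm with h | h
    · linear_combination -h
    · exact absurd h hm
  -- η = -1
  have hq : (2 * η - 1) * (η + 1) = 0 := by
    linear_combination (-2 * η) * htη + (1 - η) * h2t
  have hηm1 : η = -1 := by
    rcases mul_eq_zero.mp hq with h | h
    · exact absurd (by rw [eq_div_iff h2]; linear_combination h) hη2
    · linear_combination h
  subst hηm1
  have h2t' : 2 * t = -1 := by linear_combination -h2t
  have hmm2 : m * m = (t - t * t) • b := by
    rw [hmm, show (1 - 2 * (t * (-1 : F))) = 0 by linear_combination h2t', zero_smul, add_zero]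
  have hmm4 : (4 : F) • (m * m) = (-3 : F) • b := by
    rw [hmm2, smul_smul, show (4 : F) * (t - t * t) = -3 by
      linear_combination (3 - 2 * t) * h2t']
  have P1 : x * a = (-1 : F) • m := by
    rw [hxe]; simp only [add_mul, smul_mul_assoc, hba, hma2]; module
  have hxbt : x * b = t • b + (-1 : F) • m := by
    rw [hxe]; simp only [add_mul, smul_mul_assoc, hbb, hmb2]; try module
  have hxmt : x * m = (t * (-1 : F)) • m + m * m := by
    rw [hxe]; simp only [add_mul, smul_mul_assoc, hbm, smul_smul]
  have P2 : (2 : F) • (x * b) = (-1 : F) • b + (-2 : F) • m := by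
    rw [hxbt, smul_add, smul_smul, h2t']; module
  have P3 : (4 : F) • (x * m) = (2 : F) • m + (-3 : F) • b := by
    rw [hxmt, smul_add, smul_smul, show (4 : F) * (t * (-1 : F)) = 2 by
      linear_combination (-2 : F) * h2t', hmm4]
  have h4 : (4 : F) ≠ 0 := by
    intro h
    exact h2 (by
      have : (2 : F) * 2 = 0 := by linear_combination h
      rcases mul_eq_zero.mp this with h' | h' <;> exact h')
  set w : A := (4 : F) • a + (-3 : F) • b + (2 : F) • m with hw
  have hxw : x * w = 0 := by
    have h40 : (4 : F) • (x * w) = 0 := by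
      rw [hw, mul_add, mul_add, mul_smul_comm, mul_smul_comm, mul_smul_comm]
      linear_combination (norm := module) (16 : F) • P1 + (-6 : F) • P2 + (2 : F) • P3
    rcases smul_eq_zero.mp h40 with h | h
    · exact absurd h h4
    · exact h
  have hwmem : w ∈ eigSp F x 0 := by rw [mem_eigSp_iff, hxw, zero_smul]
  have hzz := hx.zz w hwmem w hwmem
  have hzz0 : x * (w * w) = 0 := by rw [eig_mul hzz, zero_smul]
  have hww : w * w = (16 : F) • a + (6 : F) • b + (-4 : F) • m := by
    rw [hw]
    simp only [mul_add, add_mul, smul_mul_assoc, mul_smul_comm, smul_smul,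
      haa, hab, hba, hbb, hbm, hmb2, ham, hma2]
    linear_combination (norm := module) hmm4
  have hfin : (4 : F) • (x * (w * w)) = (-96 : F) • m := by
    rw [hww, mul_add, mul_add, mul_smul_comm, mul_smul_comm, mul_smul_comm]
    linear_combination (norm := module) (64 : F) • P1 + (12 : F) • P2 + (-4 : F) • P3
  rw [hzz0, smul_zero] at hfin
  have h3 : (3 : F) ≠ 0 := by
    intro h3
    exact hη2 (by rw [eq_div_iff h2]; linear_combination -h3)
  rcases smul_eq_zero.mp hfin.symm with h | h
  · have h96 : (-96 : F) = -(2 * 2 * 2 * 2 * 2 * 3) := by norm_num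
    rw [h96, neg_eq_zero] at h
    exact (mul_ne_zero (mul_ne_zero (mul_ne_zero (mul_ne_zero (mul_ne_zero h2 h2) h2) h2) h2) h3) h
  · exact hm h

/-- for `η ≠ 1/2` and `A` generated by a Miyamoto-closed set `X` of
primitive axes, two axes of `X` with the same nontrivial Miyamoto map coincide. -/
theorem tau_injective_on_axes
    (h2 : (2 : F) ≠ 0) (η : F) (hη0 : η ≠ 0) (hη1 : η ≠ 1) (hη2 : η ≠ 1 / 2)
    (X : Set A) (haxes : ∀ a ∈ X, IsPrimitiveAxis η a)
    (hclosed : ∀ b ∈ X, ∀ τ : A →ₗ[F] A, IsMiyamotoMap η b τ → ∀ x ∈ X, τ x ∈ X)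
    (hgen : NonUnitalAlgebra.adjoin F X = ⊤)
    (a b : A) (haX : a ∈ X) (hbX : b ∈ X)
    (τa τb : A →ₗ[F] A)
    (hτa : IsMiyamotoMap η a τa) (hτb : IsMiyamotoMap η b τb)
    (heq : τa = τb) (hnid : τa ≠ LinearMap.id) :
    a = b := by
  have ha := haxes a haX
  have hb := haxes b hbX
  have hnidb : τb ≠ LinearMap.id := heq ▸ hnid
  have ha0' : a ≠ 0 := axis_ne_zero hη0 ha hτa hnid
  have hb0' : b ≠ 0 := axis_ne_zero hη0 hb hτb hnidb
  -- decompose b w.r.t. a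
  obtain ⟨⟨φ, α, γ⟩, ⟨hα, hγ, hbe⟩, -⟩ := ha.decomp b
  have hτab : τa b = b := by
    rw [heq]; exact hτb.1 b (Submodule.mem_sup_left (a_mem_one hb.idem))
  have hγ0 : γ = 0 := by
    have h := miy_apply hτa ha.idem φ hα hγ
    rw [← hbe, hτab, hbe] at h
    have h2γ : (2 : F) • γ = 0 := by linear_combination (norm := module) h
    exact (smul_eq_zero.mp h2γ).resolve_left h2
  rw [hγ0, add_zero] at hbe
  have hab : a * b = φ • a := by
    rw [hbe, mul_add, mul_smul_comm, ha.idem, eig_mul hα, zero_smul, add_zero]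
  -- decompose a w.r.t. b
  obtain ⟨⟨ψ, β, δ⟩, ⟨hβ, hδ, hae⟩, -⟩ := hb.decomp a
  have hτba : τb a = a := by
    rw [← heq]; exact hτa.1 a (Submodule.mem_sup_left (a_mem_one ha.idem))
  have hδ0 : δ = 0 := by
    have h := miy_apply hτb hb.idem ψ hβ hδ
    rw [← hae, hτba, hae] at h
    have h2δ : (2 : F) • δ = 0 := by linear_combination (norm := module) h
    exact (smul_eq_zero.mp h2δ).resolve_left h2
  rw [hδ0, add_zero] at hae
  have hba : a * b = ψ • b := by
    rw [mul_comm, hae, mul_add, mul_smul_comm, hb.idem, eig_mul hβ, zero_smul, add_zero]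
  -- φ² = φ
  have hφ : φ * φ = φ := by
    have h0 := hb.idem
    rw [hbe] at h0
    have hexp : (φ • a + α) * (φ • a + α)
        = (φ * φ) • a + (α * α) + (0 : A) := by
      have hαa : α * a = 0 := by rw [mul_comm, eig_mul hα, zero_smul]
      simp only [mul_add, add_mul, smul_mul_assoc, mul_smul_comm, smul_smul,
        ha.idem, eig_mul hα, hαa, zero_smul]
      module
    rw [hexp] at h0
    have h0' : (φ * φ) • a + (α * α) + (0 : A) = φ • a + α + (0 : A) := by
      rw [h0, add_zero]
    obtain ⟨hc, -, -⟩ := decomp_unique ha (ha.zz α hα α hα) (zero_mem _) hα (zero_mem _) h0'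
    exact hc
  have hφ01 : φ = 0 ∨ φ = 1 := by
    rcases mul_eq_zero.mp (show φ * (φ - 1) = 0 by linear_combination hφ) with h | h
    · exact Or.inl h
    · exact Or.inr (by linear_combination h)
  rcases hφ01 with hφ0 | hφ1
  swap
  · -- φ = 1 : a = ψ • b, hence a = b
    have haψ : a = ψ • b := by
      have := hab.symm.trans hba
      rw [hφ1, one_smul] at this
      exact this
    have hψ : ψ * ψ = ψ := by
      have h0 := ha.idem
      rw [haψ, smul_mul_assoc, mul_smul_comm, hb.idem, smul_smul] at h0
      rcases smul_eq_zero.mp (show (ψ * ψ - ψ) • b = 0 by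
        rw [sub_smul, h0, sub_self]) with h | h
      · linear_combination h
      · exact absurd h hb0'
    rcases mul_eq_zero.mp (show ψ * (ψ - 1) = 0 by linear_combination hψ) with h | h
    · rw [haψ, h, zero_smul] at ha0' ⊢
      exact absurd rfl ha0'
    · rw [haψ, show ψ = 1 by linear_combination h, one_smul]
  -- φ = 0 : derive a contradiction
  exfalso
  have hab0 : a * b = 0 := by rw [hab, hφ0, zero_smul]
  have hbA0 : b ∈ eigSp F a 0 := by rw [mem_eigSp_iff, hab0, zero_smul]
  have haB0 : a ∈ eigSp F b 0 := by rw [mem_eigSp_iff, mul_comm, hab0, zero_smul]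
  have habneq : a ≠ b := by
    intro h
    rw [← h] at hbe
    have : (1 : F) • a + (0 : A) + (0 : A) = φ • a + α + (0 : A) := by
      rw [one_smul, add_zero, add_zero, add_zero, ← hbe]
    obtain ⟨hc, -, -⟩ := decomp_unique ha (zero_mem _) (zero_mem _) hα (zero_mem _) this
    rw [hφ0] at hc
    exact one_ne_zero hc
  -- find a generator with nonzero η-part
  by_cases hXsub : ∀ x ∈ X, x ∈ eigSp F a 1 ⊔ eigSp F a 0
  · apply hnid
    ext z
    have hz : z ∈ eigSp F a 1 ⊔ eigSp F a 0 := by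
      have hz' : z ∈ NonUnitalAlgebra.adjoin F X := by rw [hgen]; trivial
      induction hz' using NonUnitalAlgebra.adjoin_induction with
      | mem x hx => exact hXsub x hx
      | add x y _ _ hx hy => exact add_mem hx hy
      | zero => exact zero_mem _
      | mul x y _ _ hx hy => exact ha.pp x hx y hy
      | smul c x _ hx => exact Submodule.smul_mem _ c hx
    simpa using hτa.1 z hz
  push_neg at hXsub
  obtain ⟨x, hxX, hxns⟩ := hXsub
  have hx := haxes x hxX
  obtain ⟨⟨s, α₁, γ₁⟩, ⟨hα₁, hγ₁, hxe⟩, -⟩ := ha.decomp x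
  obtain ⟨⟨t, β₁, γ₂⟩, ⟨hβ₁, hγ₂, hxe'⟩, -⟩ := hb.decomp x
  have hγeq : γ₁ = γ₂ := by
    have h1 := miy_apply hτa ha.idem s hα₁ hγ₁
    have hh2 := miy_apply hτb hb.idem t hβ₁ hγ₂
    rw [← hxe] at h1
    rw [← hxe'] at hh2
    have h3 : s • a + α₁ - γ₁ = t • b + β₁ - γ₂ := by rw [← h1, ← hh2, heq]
    have h4 : (2 : F) • γ₁ = (2 : F) • γ₂ := by
      have h5 := hxe.symm.trans hxe'
      linear_combination (norm := module) h5 - h3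
    exact smul_right_injective A h2 h4
  have hmb : γ₁ ∈ eigSp F b η := hγeq ▸ hγ₂
  have hm : γ₁ ≠ 0 := by
    intro h0
    apply hxns
    rw [hxe, h0, add_zero]
    exact add_mem
      (Submodule.mem_sup_left (Submodule.smul_mem _ _ (a_mem_one ha.idem)))
      (Submodule.mem_sup_right hα₁)
  have hxe2 : x = t • b + β₁ + γ₁ := by rw [hxe', hγeq]
  have hxa : x * a = s • a + η • γ₁ := by
    rw [mul_comm, hxe, mul_add, mul_add, mul_smul_comm, ha.idem, eig_mul hα₁,
      zero_smul, add_zero, eig_mul hγ₁]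
  have hxb : x * b = t • b + η • γ₁ := by
    rw [mul_comm, hxe2, mul_add, mul_add, mul_smul_comm, hb.idem, eig_mul hβ₁,
      zero_smul, add_zero, eig_mul hmb]
  obtain ⟨hC1, hC2⟩ := key_eqs ha hx hbA0 hγ₁ hm hα₁ hxe hxa hxb
  obtain ⟨hC1', hC2'⟩ := key_eqs hb hx haB0 hmb hm hβ₁ hxe2 hxb hxa
  have hsq : (a - b) * (a - b) = a + b := by
    rw [mul_sub, sub_mul, sub_mul, ha.idem, hb.idem, hab0, mul_comm b a, hab0]
    module
  by_cases hs : s = 0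
  · by_cases ht : t = 0
    · -- s = 0, t = 0
      have hmem : a - b ∈ eigSp F x 0 := by
        rw [mem_eigSp_iff, mul_sub, hxa, hxb, hs, ht, zero_smul]
        module
      have hzz := hx.zz _ hmem _ hmem
      have h0 : x * ((a - b) * (a - b)) = 0 := by rw [eig_mul hzz, zero_smul]
      rw [hsq, mul_add, hxa, hxb, hs, ht] at h0
      have h2η : (2 * η) • γ₁ = 0 := by linear_combination (norm := module) h0
      rcases smul_eq_zero.mp h2η with h | h
      · exact mul_ne_zero h2 hη0 h
      · exact hm h
    · -- s = 0, t ≠ 0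
      rw [hs] at hC1' hC2
      have htη : t * (1 - η) = η := by
        have hz0 : (t * (1 - η) - η) * t = 0 := by linear_combination hC1'
        rcases mul_eq_zero.mp hz0 with h | h
        · linear_combination h
        · exact absurd h ht
      have hcoef : η * (0 - t) ≠ 0 := by
        intro h
        rcases mul_eq_zero.mp h with h | h
        · exact hη0 h
        · exact ht (by linear_combination -h)
      have hαb : α₁ = t • b := by
        have hc : (-(t ^ 2 - η * t)) = (η * (0 - t)) * t := by linear_combination -hC1'
        rw [hc, mul_smul] at hC2
        exact (smul_right_injective A hcoef hC2).symm
      have hxe3 : x = t • b + γ₁ := by rw [hxe, hs, hαb, zero_smul, zero_add]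
      exact case_s0 h2 hη2 hb hx ha.idem hab0 (eig_mul hγ₁) hmb hm hxe3 htη
  · by_cases ht : t = 0
    · -- s ≠ 0, t = 0 : symmetric
      rw [ht] at hC1 hC2'
      have hsη : s * (1 - η) = η := by
        have hz0 : (s * (1 - η) - η) * s = 0 := by linear_combination hC1
        rcases mul_eq_zero.mp hz0 with h | h
        · linear_combination h
        · exact absurd h hs
      have hcoef : η * (0 - s) ≠ 0 := by
        intro h
        rcases mul_eq_zero.mp h with h | h
        · exact hη0 h
        · exact hs (by linear_combination -h)
      have hβa : β₁ = s • a := by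
        have hc : (-(s ^ 2 - η * s)) = (η * (0 - s)) * s := by linear_combination -hC1
        rw [hc, mul_smul] at hC2'
        exact (smul_right_injective A hcoef hC2').symm
      have hxe3 : x = s • a + γ₁ := by rw [hxe2, ht, hβa, zero_smul, zero_add]
      have hba0 : b * a = 0 := by rw [mul_comm]; exact hab0
      exact case_s0 h2 hη2 ha hx hb.idem hba0 (eig_mul hmb) hγ₁ hm hxe3 hsη
    · -- s ≠ 0, t ≠ 0
      have e1 : s - η = η * (s - t) := by
        have hz0 : (s - η - η * (s - t)) * s = 0 := by linear_combination hC1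
        rcases mul_eq_zero.mp hz0 with h | h
        · linear_combination h
        · exact absurd h hs
      have e2 : t - η = η * (t - s) := by
        have hz0 : (t - η - η * (t - s)) * t = 0 := by linear_combination hC1'
        rcases mul_eq_zero.mp hz0 with h | h
        · linear_combination h
        · exact absurd h ht
      have hG : (s - η) * (1 - 2 * η) = 0 := by
        linear_combination (1 - η) * e1 - η * e2
      rcases mul_eq_zero.mp hG with hsη | h12
      swap
      · exact hη2 (by rw [eq_div_iff h2]; linear_combination -h12)
      have hsval : s = η := by linear_combination hsη
      have htval : t = η := by linear_combination e1 + e2 - hsη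
      have hmemη : a - b ∈ eigSp F x η := by
        rw [mem_eigSp_iff, mul_sub, hxa, hxb, hsval, htval]
        module
      have hsup := hx.mm _ hmemη _ hmemη
      rw [hsq] at hsup
      obtain ⟨y₁, hy₁, y₀, hy₀, hsum⟩ := Submodule.mem_sup.mp hsup
      rw [hx.prim] at hy₁
      obtain ⟨μ, hμ⟩ := Submodule.mem_span_singleton.mp hy₁
      have hxab : x * (a + b) = μ • x := by
        rw [← hsum, ← hμ, mul_add, mul_smul_comm, hx.idem, eig_mul hy₀, zero_smul, add_zero]
      have hxab' : x * (a + b) = η • a + η • b + (2 * η) • γ₁ := by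
        rw [mul_add, hxa, hxb, hsval, htval]; module
      have hbig : (μ * η) • a + μ • α₁ + μ • γ₁
          = η • a + (η • b) + ((2 * η) • γ₁) := by
        have hμx : μ • x = η • a + η • b + (2 * η) • γ₁ := by rw [← hxab, hxab']
        rw [hxe, hsval] at hμx
        linear_combination (norm := module) hμx
      obtain ⟨hc1, -, hc3⟩ := decomp_unique ha
        (Submodule.smul_mem _ _ hα₁) (Submodule.smul_mem _ _ hγ₁)
        (Submodule.smul_mem _ _ hbA0) (Submodule.smul_mem _ _ hγ₁) hbig
      have hμval : μ = 2 * η := by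
        have h5 := sub_eq_zero.mpr hc3
        rw [← sub_smul] at h5
        rcases smul_eq_zero.mp h5 with h | h
        · linear_combination h
        · exact absurd h hm
      rw [hμval] at hc1
      have : η * (2 * η - 1) = 0 := by linear_combination hc1
      rcases mul_eq_zero.mp this with h | h
      · exact hη0 h
      · exact hη2 (by rw [eq_div_iff h2]; linear_combination h)
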